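/- The antipode S of H_1^i satisfies S⁴ = id but S² ≠ id; its eigenvalues are 1, i, -i, with the eigenspace for 1 spanned by {e_0, e_1, e_0EF, e_1EF}, for i by {e_0E - i·e_1E, e_0F + i·e_1F}, and for -i by {e_0E + i·e_1E, e_0F - i·e_1F}. -/

import Mathlib

noncomputable section


namespace Stmt11

def X (n : Fin 3) : FreeAlgebra ℂ (Fin 3) := FreeAlgebra.ι ℂ n

/-- Relations of `H_1^i`: `KE = -EK`, `KF = -FK`, `EF = FE`, `E² = 0`, `F² = 0`, `K² = 1`. -/
inductive rel : FreeAlgebra ℂ (Fin 3) → FreeAlgebra ℂ (Fin 3) → Prop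
  | ke : rel (X 0 * X 1) (-(X 1 * X 0))
  | kf : rel (X 0 * X 2) (-(X 2 * X 0))
  | ef : rel (X 1 * X 2) (X 2 * X 1)
  | e2 : rel (X 1 ^ 2) 0
  | f2 : rel (X 2 ^ 2) 0
  | k2 : rel (X 0 ^ 2) 1

/-- The algebra `H_1^i`. -/
abbrev H1 := RingQuot rel

def K : H1 := RingQuot.mkAlgHom ℂ rel (X 0)
def E : H1 := RingQuot.mkAlgHom ℂ rel (X 1)
def F : H1 := RingQuot.mkAlgHom ℂ rel (X 2)
def e0 : H1 := (2 : ℂ)⁻¹ • (1 + K)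
def e1 : H1 := (2 : ℂ)⁻¹ • (1 - K)


/-! ### Relations in `H1` -/

lemma rKE : K * E = -(E * K) := by
  simpa [K, E, map_mul, map_neg] using RingQuot.mkAlgHom_rel ℂ rel.ke
lemma rKF : K * F = -(F * K) := by
  simpa [K, F, map_mul, map_neg] using RingQuot.mkAlgHom_rel ℂ rel.kf
lemma rEF : E * F = F * E := by
  simpa [E, F, map_mul] using RingQuot.mkAlgHom_rel ℂ rel.ef
@[simp] lemma rE2 : E * E = 0 := by
  simpa [E, map_pow, sq] using RingQuot.mkAlgHom_rel ℂ rel.e2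
@[simp] lemma rF2 : F * F = 0 := by
  simpa [F, map_pow, sq] using RingQuot.mkAlgHom_rel ℂ rel.f2
@[simp] lemma rK2 : K * K = 1 := by
  simpa [K, map_pow, sq] using RingQuot.mkAlgHom_rel ℂ rel.k2

@[simp] lemma Hmul_neg (a b : H1) : a * -b = -(a * b) := mul_neg a b
@[simp] lemma Hneg_mul (a b : H1) : -a * b = -(a * b) := neg_mul a b

@[simp] lemma EK : E * K = -(K * E) := by rw [rKE, neg_neg]
@[simp] lemma FK : F * K = -(K * F) := by rw [rKF, neg_neg]
@[simp] lemma FE : F * E = E * F := rEF.symm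
@[simp] lemma EK' (x : H1) : E * (K * x) = -(K * (E * x)) := by
  rw [← mul_assoc, EK]
  exact (neg_mul (K*E) x).trans (congrArg Neg.neg (mul_assoc K E x))
@[simp] lemma FK' (x : H1) : F * (K * x) = -(K * (F * x)) := by
  rw [← mul_assoc, FK]
  exact (neg_mul (K*F) x).trans (congrArg Neg.neg (mul_assoc K F x))
@[simp] lemma FE' (x : H1) : F * (E * x) = E * (F * x) := by
  rw [← mul_assoc, FE, mul_assoc]
@[simp] lemma KK' (x : H1) : K * (K * x) = x := by rw [← mul_assoc, rK2, one_mul]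
@[simp] lemma EE' (x : H1) : E * (E * x) = 0 := by rw [← mul_assoc, rE2, zero_mul]
@[simp] lemma FF' (x : H1) : F * (F * x) = 0 := by rw [← mul_assoc, rF2, zero_mul]

/-! ### The matrix model (left regular representation) -/

def MK : Matrix (Fin 8) (Fin 8) ℤ :=
  !![0,1,0,0,0,0,0,0; 1,0,0,0,0,0,0,0; 0,0,0,1,0,0,0,0; 0,0,1,0,0,0,0,0;
     0,0,0,0,0,1,0,0; 0,0,0,0,1,0,0,0; 0,0,0,0,0,0,0,1; 0,0,0,0,0,0,1,0]
def ME : Matrix (Fin 8) (Fin 8) ℤ :=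
  !![0,0,0,0,0,0,0,0; 0,0,0,0,0,0,0,0; 1,0,0,0,0,0,0,0; 0,-1,0,0,0,0,0,0;
     0,0,0,0,0,0,0,0; 0,0,0,0,0,0,0,0; 0,0,0,0,1,0,0,0; 0,0,0,0,0,-1,0,0]
def MF : Matrix (Fin 8) (Fin 8) ℤ :=
  !![0,0,0,0,0,0,0,0; 0,0,0,0,0,0,0,0; 0,0,0,0,0,0,0,0; 0,0,0,0,0,0,0,0;
     1,0,0,0,0,0,0,0; 0,-1,0,0,0,0,0,0; 0,0,1,0,0,0,0,0; 0,0,0,-1,0,0,0,0]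

def toC : Matrix (Fin 8) (Fin 8) ℤ →+* Matrix (Fin 8) (Fin 8) ℂ :=
  (Int.castRingHom ℂ).mapMatrix

def Mgen : Fin 3 → Matrix (Fin 8) (Fin 8) ℂ := ![toC MK, toC ME, toC MF]

def φ : H1 →ₐ[ℂ] Matrix (Fin 8) (Fin 8) ℂ :=
  RingQuot.liftAlgHom ℂ ⟨FreeAlgebra.lift ℂ Mgen, by
    rintro x y (_|_|_|_|_|_) <;>
      simp only [X, _root_.map_mul, _root_.map_neg, _root_.map_pow, _root_.map_zero,
        _root_.map_one, FreeAlgebra.lift_ι_apply, Mgen, Matrix.cons_val_zero,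
        Matrix.cons_val_one, Matrix.head_cons, sq] <;>
    [ (have : MK * ME = -(ME * MK) := by decide
       calc toC MK * toC ME = toC (MK * ME) := (_root_.map_mul toC _ _).symm
        _ = toC (-(ME * MK)) := by rw [this]
        _ = -(toC ME * toC MK) := by rw [_root_.map_neg, _root_.map_mul]);
      (have : MK * MF = -(MF * MK) := by decide
       calc toC MK * toC MF = toC (MK * MF) := (_root_.map_mul toC _ _).symm
        _ = -(toC MF * toC MK) := by rw [this, _root_.map_neg, _root_.map_mul]);
      (have : ME * MF = MF * ME := by decide
       calc toC ME * toC MF = toC (ME * MF) := (_root_.map_mul toC _ _).symm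
        _ = toC MF * toC ME := by rw [this, _root_.map_mul]);
      (have : ME * ME = 0 := by decide
       calc toC ME * toC ME = toC (ME * ME) := (_root_.map_mul toC _ _).symm
        _ = 0 := by rw [this, _root_.map_zero]);
      (have : MF * MF = 0 := by decide
       calc toC MF * toC MF = toC (MF * MF) := (_root_.map_mul toC _ _).symm
        _ = 0 := by rw [this, _root_.map_zero]);
      (have : MK * MK = 1 := by decide
       calc toC MK * toC MK = toC (MK * MK) := (_root_.map_mul toC _ _).symm
        _ = 1 := by rw [this, _root_.map_one])]⟩

/-- the eight monomials -/
def m : Fin 8 → H1 := ![1, K, E, K*E, F, K*F, E*F, K*(E*F)]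
def Mi : Fin 8 → Matrix (Fin 8) (Fin 8) ℤ := ![1, MK, ME, MK*ME, MF, MK*MF, ME*MF, MK*(ME*MF)]

lemma φK : φ K = toC MK := by
  simp [φ, K, X, RingQuot.liftAlgHom_mkAlgHom_apply, FreeAlgebra.lift_ι_apply, Mgen]
lemma φE : φ E = toC ME := by
  simp [φ, E, X, RingQuot.liftAlgHom_mkAlgHom_apply, FreeAlgebra.lift_ι_apply, Mgen]
lemma φF : φ F = toC MF := by
  simp [φ, F, X, RingQuot.liftAlgHom_mkAlgHom_apply, FreeAlgebra.lift_ι_apply, Mgen]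

lemma φm (j : Fin 8) : φ (m j) = toC (Mi j) := by
  fin_cases j
  · show φ 1 = toC 1; simp
  · exact φK
  · exact φE
  · show φ (K*E) = toC (MK*ME); rw [_root_.map_mul, _root_.map_mul, φK, φE]
  · exact φF
  · show φ (K*F) = toC (MK*MF); rw [_root_.map_mul, _root_.map_mul, φK, φF]
  · show φ (E*F) = toC (ME*MF); rw [_root_.map_mul, _root_.map_mul, φE, φF]
  · show φ (K*(E*F)) = toC (MK*(ME*MF))
    rw [_root_.map_mul, _root_.map_mul, _root_.map_mul, _root_.map_mul, φK, φE, φF]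

lemma indep : LinearIndependent ℂ m := by
  let ℓ : H1 →ₗ[ℂ] (Fin 8 → ℂ) :=
    { toFun := fun v i => φ v i 0
      map_add' := by intro a b; ext i; simp
      map_smul' := by intro c a; ext i; simp }
  have key : ∀ j i : Fin 8, (Mi j) i 0 = if i = j then 1 else 0 := by decide
  have hcomp : ℓ ∘ m = ⇑(Pi.basisFun ℂ (Fin 8)) := by
    funext j
    ext i
    simp only [Function.comp_apply, ℓ, LinearMap.coe_mk, AddHom.coe_mk, φm, toC,
      RingHom.mapMatrix_apply, Matrix.map_apply, key j i, Pi.basisFun_apply]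
    split <;> simp_all [Pi.single_apply]
  have := (Pi.basisFun ℂ (Fin 8)).linearIndependent
  rw [← hcomp] at this
  exact this.of_comp ℓ

/-! ### Spanning -/

def Sp : Submodule ℂ H1 := Submodule.span ℂ (Set.range m)

lemma Sp1 : (1 : H1) ∈ Sp := Submodule.subset_span ⟨0, rfl⟩
lemma SpK : K ∈ Sp := Submodule.subset_span ⟨1, rfl⟩
lemma SpE : E ∈ Sp := Submodule.subset_span ⟨2, rfl⟩
lemma SpKE : K*E ∈ Sp := Submodule.subset_span ⟨3, rfl⟩
lemma SpF : F ∈ Sp := Submodule.subset_span ⟨4, rfl⟩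
lemma SpKF : K*F ∈ Sp := Submodule.subset_span ⟨5, rfl⟩
lemma SpEF : E*F ∈ Sp := Submodule.subset_span ⟨6, rfl⟩
lemma SpKEF : K*(E*F) ∈ Sp := Submodule.subset_span ⟨7, rfl⟩

lemma Kmul {x : H1} (hx : x ∈ Sp) : K * x ∈ Sp := by
  induction hx using Submodule.span_induction with
  | mem x h =>
    obtain ⟨j, rfl⟩ := h
    fin_cases j
    · show K * 1 ∈ Sp; rw [mul_one]; exact SpK
    · show K * K ∈ Sp; rw [rK2]; exact Sp1
    · exact SpKE
    · show K * (K * E) ∈ Sp; rw [KK']; exact SpE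
    · exact SpKF
    · show K * (K * F) ∈ Sp; rw [KK']; exact SpF
    · exact SpKEF
    · show K * (K * (E * F)) ∈ Sp; rw [KK']; exact SpEF
  | zero => simpa using Sp.zero_mem
  | add a b _ _ ha hb => rw [mul_add]; exact Sp.add_mem ha hb
  | smul c a _ ha => rw [mul_smul_comm]; exact Sp.smul_mem c ha

lemma Emul {x : H1} (hx : x ∈ Sp) : E * x ∈ Sp := by
  induction hx using Submodule.span_induction with
  | mem x h =>
    obtain ⟨j, rfl⟩ := h
    fin_cases j
    · show E * 1 ∈ Sp; rw [mul_one]; exact SpE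
    · show E * K ∈ Sp; rw [EK]; exact Sp.neg_mem SpKE
    · show E * E ∈ Sp; rw [rE2]; exact Sp.zero_mem
    · show E * (K * E) ∈ Sp; simp
    · exact SpEF
    · show E * (K * F) ∈ Sp; rw [EK']; exact Sp.neg_mem SpKEF
    · show E * (E * F) ∈ Sp; rw [EE']; exact Sp.zero_mem
    · show E * (K * (E * F)) ∈ Sp; simp
  | zero => simpa using Sp.zero_mem
  | add a b _ _ ha hb => rw [mul_add]; exact Sp.add_mem ha hb
  | smul c a _ ha => rw [mul_smul_comm]; exact Sp.smul_mem c ha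

lemma Fmul {x : H1} (hx : x ∈ Sp) : F * x ∈ Sp := by
  induction hx using Submodule.span_induction with
  | mem x h =>
    obtain ⟨j, rfl⟩ := h
    fin_cases j
    · show F * 1 ∈ Sp; rw [mul_one]; exact SpF
    · show F * K ∈ Sp; rw [FK]; exact Sp.neg_mem SpKF
    · show F * E ∈ Sp; rw [FE]; exact SpEF
    · show F * (K * E) ∈ Sp; rw [FK', FE]; exact Sp.neg_mem SpKEF
    · show F * F ∈ Sp; rw [rF2]; exact Sp.zero_mem
    · show F * (K * F) ∈ Sp; simp
    · show F * (E * F) ∈ Sp; simp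
    · show F * (K * (E * F)) ∈ Sp; simp
  | zero => simpa using Sp.zero_mem
  | add a b _ _ ha hb => rw [mul_add]; exact Sp.add_mem ha hb
  | smul c a _ ha => rw [mul_smul_comm]; exact Sp.smul_mem c ha

lemma mul_mem_Sp {x y : H1} (hx : x ∈ Sp) (hy : y ∈ Sp) : x * y ∈ Sp := by
  induction hx using Submodule.span_induction with
  | mem x h =>
    obtain ⟨j, rfl⟩ := h
    fin_cases j
    · show 1 * y ∈ Sp; rw [one_mul]; exact hy
    · exact Kmul hy
    · exact Emul hy
    · show K * E * y ∈ Sp; rw [mul_assoc]; exact Kmul (Emul hy)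
    · exact Fmul hy
    · show K * F * y ∈ Sp; rw [mul_assoc]; exact Kmul (Fmul hy)
    · show E * F * y ∈ Sp; rw [mul_assoc]; exact Emul (Fmul hy)
    · show K * (E * F) * y ∈ Sp; rw [mul_assoc, mul_assoc]; exact Kmul (Emul (Fmul hy))
  | zero => simpa using Sp.zero_mem
  | add a b _ _ ha hb => rw [add_mul]; exact Sp.add_mem ha hb
  | smul c a _ ha => rw [smul_mul_assoc]; exact Sp.smul_mem c ha

lemma Sp_top : ∀ x : H1, x ∈ Sp := by
  intro x
  obtain ⟨y, rfl⟩ := RingQuot.mkAlgHom_surjective ℂ rel x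
  induction y using FreeAlgebra.induction with
  | grade0 r =>
    rw [AlgHom.commutes]
    simpa [Algebra.algebraMap_eq_smul_one] using Sp.smul_mem r Sp1
  | grade1 i =>
    fin_cases i
    · exact SpK
    · exact SpE
    · exact SpF
  | mul a b ha hb => rw [map_mul]; exact mul_mem_Sp ha hb
  | add a b ha hb => rw [map_add]; exact Sp.add_mem ha hb

/-! ### The basis -/

def bas : Module.Basis (Fin 8) ℂ H1 :=
  Module.Basis.mk indep (fun x _ => Sp_top x)

lemma bas_eq : ⇑bas = m := Module.Basis.coe_mk _ _

lemma mb0 : bas 0 = 1 := by rw [bas_eq]; rfl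
lemma mb1 : bas 1 = K := by rw [bas_eq]; rfl
lemma mb2 : bas 2 = E := by rw [bas_eq]; rfl
lemma mb3 : bas 3 = K*E := by rw [bas_eq]; rfl
lemma mb4 : bas 4 = F := by rw [bas_eq]; rfl
lemma mb5 : bas 5 = K*F := by rw [bas_eq]; rfl
lemma mb6 : bas 6 = E*F := by rw [bas_eq]; rfl
lemma mb7 : bas 7 = K*(E*F) := by rw [bas_eq]; rfl

/-! ### Scalar auxiliary lemmas -/

lemma aux1 {μ x : ℂ} (h1 : μ ≠ 1) (h : x = μ * x) : x = 0 := by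
  have h2 : (μ - 1) * x = 0 := by linear_combination -h
  rcases mul_eq_zero.mp h2 with h3 | h3
  · exact absurd (by linear_combination h3) h1
  · exact h3

lemma aux2 {μ a b : ℂ} (hsq : μ ^ 2 ≠ -1) (h2 : b = μ * a) (h3 : -a = μ * b) :
    a = 0 ∧ b = 0 := by
  have ha : (μ ^ 2 + 1) * a = 0 := by linear_combination -h3 - μ * h2
  rcases mul_eq_zero.mp ha with h4 | h4
  · exact absurd (by linear_combination h4) hsq
  · exact ⟨h4, by rw [h2, h4, mul_zero]⟩

lemma negI_ne_one : (-Complex.I : ℂ) ≠ 1 := by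
  intro h
  have := congrArg Complex.im h
  simp at this

lemma one_sq_ne : ((1:ℂ)) ^ 2 ≠ -1 := by
  intro h
  rw [one_pow] at h
  have := congrArg Complex.re h
  norm_num at this

lemma he01 : e0 + e1 = 1 := by rw [e0, e1]; module
lemma he0K : e0 - e1 = K := by rw [e0, e1]; module
lemma heEF : e0*(E*F) + e1*(E*F) = E*F := by rw [← add_mul, he01, one_mul]
lemma heKEF : e0*(E*F) - e1*(E*F) = K*(E*F) := by rw [← sub_mul, he0K]
lemma hA6 : e0 * (E*F) = (2:ℂ)⁻¹ • (bas 6 + bas 7) := by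
  rw [mb6, mb7, e0, smul_mul_assoc, add_mul, one_mul, ← mul_assoc]
lemma hB6 : e1 * (E*F) = (2:ℂ)⁻¹ • (bas 6 - bas 7) := by
  rw [mb6, mb7, e1, smul_mul_assoc, sub_mul, one_mul, ← mul_assoc]
lemma hAE : e0 * E = (2:ℂ)⁻¹ • (bas 2 + bas 3) := by
  rw [mb2, mb3, e0, smul_mul_assoc, add_mul, one_mul]
lemma hBE : e1 * E = (2:ℂ)⁻¹ • (bas 2 - bas 3) := by
  rw [mb2, mb3, e1, smul_mul_assoc, sub_mul, one_mul]
lemma hAF : e0 * F = (2:ℂ)⁻¹ • (bas 4 + bas 5) := by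
  rw [mb4, mb5, e0, smul_mul_assoc, add_mul, one_mul]
lemma hBF : e1 * F = (2:ℂ)⁻¹ • (bas 4 - bas 5) := by
  rw [mb4, mb5, e1, smul_mul_assoc, sub_mul, one_mul]

lemma musq {μ : ℂ} (h2 : μ ≠ Complex.I) (h3 : μ ≠ -Complex.I) : μ ^ 2 ≠ -1 := by
  intro h
  have h4 : (μ - Complex.I) * (μ + Complex.I) = 0 := by
    linear_combination h - Complex.I_sq
  rcases mul_eq_zero.mp h4 with h5 | h5
  · exact h2 (by linear_combination h5)
  · exact h3 (by linear_combination h5)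


lemma I_ne_one' : Complex.I ≠ 1 := by
  intro h
  have := congrArg Complex.im h
  simp at this

set_option maxHeartbeats 2000000 in
/-- The antipode `S` of `H_1^i` satisfies `S⁴ = id` but `S² ≠ id`; its eigenvalues are
exactly `1, i, -i`, with eigenspaces spanned by `{e₀, e₁, e₀EF, e₁EF}`,
`{e₀E - i·e₁E, e₀F + i·e₁F}` and `{e₀E + i·e₁E, e₀F - i·e₁F}` respectively. -/
theorem antipode_order_and_eigenspaces (S : Module.End ℂ H1) (hS1 : S 1 = 1)
    (hSmul : ∀ x y : H1, S (x * y) = S y * S x)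
    (hSK : S K = K) (hSE : S E = -(K * E)) (hSF : S F = -(F * K)) :
    S ∘ₗ S ∘ₗ S ∘ₗ S = LinearMap.id ∧ S ∘ₗ S ≠ LinearMap.id ∧
    (∀ μ : ℂ, Module.End.HasEigenvalue S μ ↔ μ ∈ ({1, Complex.I, -Complex.I} : Set ℂ)) ∧
    Module.End.eigenspace S 1 =
      Submodule.span ℂ ({e0, e1, e0 * (E * F), e1 * (E * F)} : Set H1) ∧
    Module.End.eigenspace S Complex.I =
      Submodule.span ℂ
        ({e0 * E - Complex.I • (e1 * E), e0 * F + Complex.I • (e1 * F)} : Set H1) ∧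
    Module.End.eigenspace S (-Complex.I) =
      Submodule.span ℂ
        ({e0 * E + Complex.I • (e1 * E), e0 * F - Complex.I • (e1 * F)} : Set H1) := by
  have hSm3 : S (K*E) = E := by
    rw [hSmul, hSE, hSK]; simp [mul_assoc]
  have hSm4 : S F = K*F := by rw [hSF]; simp
  have hSm5 : S (K*F) = -F := by
    rw [hSmul, hSm4, hSK]; simp [mul_assoc]
  have hSm6 : S (E*F) = E*F := by
    rw [hSmul, hSm4, hSE]; simp [mul_assoc]
  have hSm7 : S (K*(E*F)) = K*(E*F) := by
    rw [hSmul, hSm6, hSK]; simp [mul_assoc]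
  have s0 : S (bas 0) = bas 0 := by rw [mb0]; exact hS1
  have s1 : S (bas 1) = bas 1 := by rw [mb1]; exact hSK
  have s2 : S (bas 2) = -(bas 3) := by rw [mb2, mb3]; exact hSE
  have s3 : S (bas 3) = bas 2 := by rw [mb3, mb2]; exact hSm3
  have s4 : S (bas 4) = bas 5 := by rw [mb4, mb5]; exact hSm4
  have s5 : S (bas 5) = -(bas 4) := by rw [mb5, mb4]; exact hSm5
  have s6 : S (bas 6) = bas 6 := by rw [mb6]; exact hSm6
  have s7 : S (bas 7) = bas 7 := by rw [mb7]; exact hSm7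
  have hSvb : ∀ v : H1, S v =
      bas.equivFun v 0 • bas 0 + bas.equivFun v 1 • bas 1 + bas.equivFun v 3 • bas 2 +
      (-(bas.equivFun v 2)) • bas 3 + (-(bas.equivFun v 5)) • bas 4 +
      bas.equivFun v 4 • bas 5 + bas.equivFun v 6 • bas 6 + bas.equivFun v 7 • bas 7 := by
    intro v
    conv_lhs => rw [← Module.Basis.sum_equivFun bas v]
    rw [map_sum, Fin.sum_univ_eight]
    simp only [map_smul, s0, s1, s2, s3, s4, s5, s6, s7]
    module
  have hC : ∀ v : H1, bas.equivFun (S v) 0 = bas.equivFun v 0 ∧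
      bas.equivFun (S v) 1 = bas.equivFun v 1 ∧
      bas.equivFun (S v) 2 = bas.equivFun v 3 ∧
      bas.equivFun (S v) 3 = -(bas.equivFun v 2) ∧
      bas.equivFun (S v) 4 = -(bas.equivFun v 5) ∧
      bas.equivFun (S v) 5 = bas.equivFun v 4 ∧
      bas.equivFun (S v) 6 = bas.equivFun v 6 ∧
      bas.equivFun (S v) 7 = bas.equivFun v 7 := by
    intro v
    refine ⟨?_, ?_, ?_, ?_, ?_, ?_, ?_, ?_⟩ <;>
      rw [hSvb v] <;>
      simp [Module.Basis.equivFun_self]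
  have hvdec : ∀ v : H1, v =
      bas.equivFun v 0 • bas 0 + bas.equivFun v 1 • bas 1 + bas.equivFun v 2 • bas 2 +
      bas.equivFun v 3 • bas 3 + bas.equivFun v 4 • bas 4 + bas.equivFun v 5 • bas 5 +
      bas.equivFun v 6 • bas 6 + bas.equivFun v 7 • bas 7 := by
    intro v
    have h := Module.Basis.sum_equivFun bas v
    rw [Fin.sum_univ_eight] at h
    exact h.symm
  -- coordinate equations for an eigenvector
  have hcoords : ∀ (μ : ℂ) (v : H1), S v = μ • v →
      (bas.equivFun v 0 = μ * bas.equivFun v 0) ∧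
      (bas.equivFun v 1 = μ * bas.equivFun v 1) ∧
      (bas.equivFun v 3 = μ * bas.equivFun v 2) ∧
      (-(bas.equivFun v 2) = μ * bas.equivFun v 3) ∧
      (-(bas.equivFun v 5) = μ * bas.equivFun v 4) ∧
      (bas.equivFun v 4 = μ * bas.equivFun v 5) ∧
      (bas.equivFun v 6 = μ * bas.equivFun v 6) ∧
      (bas.equivFun v 7 = μ * bas.equivFun v 7) := by
    intro μ v hv
    have hμc : ∀ j, bas.equivFun (S v) j = μ * bas.equivFun v j := by
      intro j; rw [hv]; simp
    obtain ⟨k0, k1, k2, k3, k4, k5, k6, k7⟩ := hC v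
    exact ⟨k0.symm.trans (hμc 0), k1.symm.trans (hμc 1), k2.symm.trans (hμc 2),
      k3.symm.trans (hμc 3), k4.symm.trans (hμc 4), k5.symm.trans (hμc 5),
      k6.symm.trans (hμc 6), k7.symm.trans (hμc 7)⟩
  -- special eigenvectors
  set wI : H1 := bas 2 + Complex.I • bas 3 with hwIdef
  set uI : H1 := bas 4 - Complex.I • bas 5 with huIdef
  set wN : H1 := bas 2 - Complex.I • bas 3 with hwNdef
  set uN : H1 := bas 4 + Complex.I • bas 5 with huNdef
  have hSwI : S wI = Complex.I • wI := by
    rw [hwIdef, map_add, map_smul, s2, s3]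
    match_scalars <;> first | ring1 | (ring_nf; simp [Complex.I_sq]; try ring)
  have hSuI : S uI = Complex.I • uI := by
    rw [huIdef, map_sub, map_smul, s4, s5]
    match_scalars <;> first | ring1 | (ring_nf; simp [Complex.I_sq]; try ring)
  have hSwN : S wN = (-Complex.I) • wN := by
    rw [hwNdef, map_sub, map_smul, s2, s3]
    match_scalars <;> first | ring1 | (ring_nf; simp [Complex.I_sq]; try ring)
  have hSuN : S uN = (-Complex.I) • uN := by
    rw [huNdef, map_add, map_smul, s4, s5]
    match_scalars <;> first | ring1 | (ring_nf; simp [Complex.I_sq]; try ring)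
  have hwIne : wI ≠ 0 := by
    intro h
    have h2 := congrArg (fun z => bas.equivFun z 2) h
    simp [hwIdef, Module.Basis.equivFun_self] at h2
  have hwNne : wN ≠ 0 := by
    intro h
    have h2 := congrArg (fun z => bas.equivFun z 2) h
    simp [hwNdef, Module.Basis.equivFun_self] at h2
  -- generator identities
  have hg1I : e0 * E - Complex.I • (e1 * E) = ((1 - Complex.I)/2) • wI := by
    rw [hAE, hBE, hwIdef]
    match_scalars <;> first | ring1 | (ring_nf; simp [Complex.I_sq]; try ring)
  have hg2I : e0 * F + Complex.I • (e1 * F) = ((1 + Complex.I)/2) • uI := by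
    rw [hAF, hBF, huIdef]
    match_scalars <;> first | ring1 | (ring_nf; simp [Complex.I_sq]; try ring)
  have hg1N : e0 * E + Complex.I • (e1 * E) = ((1 + Complex.I)/2) • wN := by
    rw [hAE, hBE, hwNdef]
    match_scalars <;> first | ring1 | (ring_nf; simp [Complex.I_sq]; try ring)
  have hg2N : e0 * F - Complex.I • (e1 * F) = ((1 - Complex.I)/2) • uN := by
    rw [hAF, hBF, huNdef]
    match_scalars <;> first | ring1 | (ring_nf; simp [Complex.I_sq]; try ring)
  have hcm : ((1 - Complex.I)/2 : ℂ) ≠ 0 :=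
    div_ne_zero (sub_ne_zero.mpr (Ne.symm I_ne_one')) two_ne_zero
  have hcp : ((1 + Complex.I)/2 : ℂ) ≠ 0 := by
    refine div_ne_zero ?_ two_ne_zero
    intro h
    have := congrArg Complex.im h
    simp at this
  refine ⟨?_, ?_, ?_, ?_, ?_, ?_⟩
  -- S^4 = id
  · refine bas.ext fun i => ?_
    fin_cases i <;>
      simp [LinearMap.comp_apply, s0, s1, s2, s3, s4, s5, s6, s7, map_neg]
  -- S^2 ≠ id
  · intro h
    have h2 : S (S (bas 2)) = bas 2 := by
      have := LinearMap.congr_fun h (bas 2)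
      simpa using this
    have h3 : S (S (bas 2)) = -(bas 2) := by rw [s2, map_neg, s3]
    have e : bas 2 = -(bas 2) := h2.symm.trans h3
    have h5 : (2:ℂ) • bas 2 = 0 := by
      rw [two_smul]
      nth_rewrite 1 [e]
      exact neg_add_cancel _
    rcases smul_eq_zero.mp h5 with h6 | h6
    · norm_num at h6
    · exact bas.ne_zero 2 h6
  -- eigenvalues
  · intro μ
    constructor
    · intro hev
      by_contra hμ
      simp only [Set.mem_insert_iff, Set.mem_singleton_iff, not_or] at hμ
      obtain ⟨hμ1, hμ2, hμ3⟩ := hμ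
      obtain ⟨v, hv, hv0⟩ := hev.exists_hasEigenvector
      have hveq : S v = μ • v := Module.End.mem_eigenspace_iff.mp hv
      obtain ⟨q0, q1, q2, q3, q4, q5, q6, q7⟩ := hcoords μ v hveq
      have z0 := aux1 hμ1 q0
      have z1 := aux1 hμ1 q1
      have z6 := aux1 hμ1 q6
      have z7 := aux1 hμ1 q7
      obtain ⟨z2, z3⟩ := aux2 (musq hμ2 hμ3) q2 q3
      obtain ⟨z5, z4⟩ := aux2 (musq hμ2 hμ3) q5 q4
      apply hv0
      rw [hvdec v, z0, z1, z2, z3, z4, z5, z6, z7]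
      simp
    · intro hμ
      simp only [Set.mem_insert_iff, Set.mem_singleton_iff] at hμ
      have h1ne : (1:H1) ≠ 0 := by
        have := bas.ne_zero 0
        rwa [mb0] at this
      rcases hμ with rfl | rfl | rfl
      · exact Module.End.hasEigenvalue_of_hasEigenvector
          ⟨Module.End.mem_eigenspace_iff.mpr (by rw [hS1, one_smul]), h1ne⟩
      · exact Module.End.hasEigenvalue_of_hasEigenvector
          ⟨Module.End.mem_eigenspace_iff.mpr hSwI, hwIne⟩
      · exact Module.End.hasEigenvalue_of_hasEigenvector
          ⟨Module.End.mem_eigenspace_iff.mpr hSwN, hwNne⟩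
  -- eigenspace 1
  · apply le_antisymm
    · intro v hv
      have hveq : S v = (1:ℂ) • v := Module.End.mem_eigenspace_iff.mp hv
      obtain ⟨q0, q1, q2, q3, q4, q5, q6, q7⟩ := hcoords 1 v hveq
      obtain ⟨z2, z3⟩ := aux2 one_sq_ne q2 q3
      obtain ⟨z5, z4⟩ := aux2 one_sq_ne q5 q4
      have hv4 : v = bas.equivFun v 0 • bas 0 + bas.equivFun v 1 • bas 1 +
          bas.equivFun v 6 • bas 6 + bas.equivFun v 7 • bas 7 := by
        rw [hvdec v, z2, z3, z4, z5]
        simp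
      rw [hv4]
      have m0mem : bas 0 ∈ Submodule.span ℂ
          ({e0, e1, e0 * (E * F), e1 * (E * F)} : Set H1) := by
        rw [mb0, ← he01]
        exact add_mem (Submodule.subset_span (by simp)) (Submodule.subset_span (by simp))
      have m1mem : bas 1 ∈ Submodule.span ℂ
          ({e0, e1, e0 * (E * F), e1 * (E * F)} : Set H1) := by
        rw [mb1, ← he0K]
        exact sub_mem (Submodule.subset_span (by simp)) (Submodule.subset_span (by simp))
      have m6mem : bas 6 ∈ Submodule.span ℂ
          ({e0, e1, e0 * (E * F), e1 * (E * F)} : Set H1) := by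
        have h : bas 6 = e0*(E*F) + e1*(E*F) := by rw [mb6]; exact heEF.symm
        rw [h]
        exact add_mem (Submodule.subset_span (by simp)) (Submodule.subset_span (by simp))
      have m7mem : bas 7 ∈ Submodule.span ℂ
          ({e0, e1, e0 * (E * F), e1 * (E * F)} : Set H1) := by
        have h : bas 7 = e0*(E*F) - e1*(E*F) := by rw [mb7]; exact heKEF.symm
        rw [h]
        exact sub_mem (Submodule.subset_span (by simp)) (Submodule.subset_span (by simp))
      exact add_mem (add_mem (add_mem (Submodule.smul_mem _ _ m0mem)
        (Submodule.smul_mem _ _ m1mem)) (Submodule.smul_mem _ _ m6mem))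
        (Submodule.smul_mem _ _ m7mem)
    · rw [Submodule.span_le]
      intro x hx
      simp only [Set.mem_insert_iff, Set.mem_singleton_iff] at hx
      rcases hx with rfl | rfl | rfl | rfl <;>
        refine SetLike.mem_coe.mpr (Module.End.mem_eigenspace_iff.mpr ?_) <;>
        rw [one_smul]
      · simp [e0, map_smul, map_add, hS1, hSK]
      · simp [e1, map_smul, map_sub, hS1, hSK]
      · rw [hA6, map_smul, map_add, s6, s7]
      · rw [hB6, map_smul, map_sub, s6, s7]
  -- eigenspace I
  · apply le_antisymm
    · intro v hv
      have hveq : S v = Complex.I • v := Module.End.mem_eigenspace_iff.mp hv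
      obtain ⟨q0, q1, q2, q3, q4, q5, q6, q7⟩ := hcoords Complex.I v hveq
      have z0 := aux1 I_ne_one' q0
      have z1 := aux1 I_ne_one' q1
      have z6 := aux1 I_ne_one' q6
      have z7 := aux1 I_ne_one' q7
      have hv2 : v = bas.equivFun v 2 • wI + (Complex.I * bas.equivFun v 5) • uI := by
        rw [hvdec v, z0, z1, z6, z7, q2, q5, hwIdef, huIdef]
        match_scalars <;> first | ring1 | (ring_nf; simp [Complex.I_sq]; try ring)
      have hwmem : wI ∈ Submodule.span ℂ
          ({e0 * E - Complex.I • (e1 * E), e0 * F + Complex.I • (e1 * F)} : Set H1) := by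
        have hrep : wI = ((1 - Complex.I)/2)⁻¹ • (e0 * E - Complex.I • (e1 * E)) := by
          rw [hg1I, smul_smul, inv_mul_cancel₀ hcm, one_smul]
        rw [hrep]
        exact Submodule.smul_mem _ _ (Submodule.subset_span (by simp))
      have humem : uI ∈ Submodule.span ℂ
          ({e0 * E - Complex.I • (e1 * E), e0 * F + Complex.I • (e1 * F)} : Set H1) := by
        have hrep : uI = ((1 + Complex.I)/2)⁻¹ • (e0 * F + Complex.I • (e1 * F)) := by
          rw [hg2I, smul_smul, inv_mul_cancel₀ hcp, one_smul]
        rw [hrep]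
        exact Submodule.smul_mem _ _ (Submodule.subset_span (by simp))
      rw [hv2]
      exact add_mem (Submodule.smul_mem _ _ hwmem) (Submodule.smul_mem _ _ humem)
    · rw [Submodule.span_le]
      intro x hx
      simp only [Set.mem_insert_iff, Set.mem_singleton_iff] at hx
      rcases hx with rfl | rfl <;>
        refine SetLike.mem_coe.mpr (Module.End.mem_eigenspace_iff.mpr ?_)
      · rw [hg1I, map_smul, hSwI, smul_comm]
      · rw [hg2I, map_smul, hSuI, smul_comm]
  -- eigenspace -I
  · apply le_antisymm
    · intro v hv
      have hveq : S v = (-Complex.I) • v := Module.End.mem_eigenspace_iff.mp hv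
      obtain ⟨q0, q1, q2, q3, q4, q5, q6, q7⟩ := hcoords (-Complex.I) v hveq
      have z0 := aux1 negI_ne_one q0
      have z1 := aux1 negI_ne_one q1
      have z6 := aux1 negI_ne_one q6
      have z7 := aux1 negI_ne_one q7
      have hv2 : v = bas.equivFun v 2 • wN + (-Complex.I * bas.equivFun v 5) • uN := by
        rw [hvdec v, z0, z1, z6, z7, q2, q5, hwNdef, huNdef]
        match_scalars <;> first | ring1 | (ring_nf; simp [Complex.I_sq]; try ring)
      have hwmem : wN ∈ Submodule.span ℂ
          ({e0 * E + Complex.I • (e1 * E), e0 * F - Complex.I • (e1 * F)} : Set H1) := by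
        have hrep : wN = ((1 + Complex.I)/2)⁻¹ • (e0 * E + Complex.I • (e1 * E)) := by
          rw [hg1N, smul_smul, inv_mul_cancel₀ hcp, one_smul]
        rw [hrep]
        exact Submodule.smul_mem _ _ (Submodule.subset_span (by simp))
      have humem : uN ∈ Submodule.span ℂ
          ({e0 * E + Complex.I • (e1 * E), e0 * F - Complex.I • (e1 * F)} : Set H1) := by
        have hrep : uN = ((1 - Complex.I)/2)⁻¹ • (e0 * F - Complex.I • (e1 * F)) := by
          rw [hg2N, smul_smul, inv_mul_cancel₀ hcm, one_smul]
        rw [hrep]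
        exact Submodule.smul_mem _ _ (Submodule.subset_span (by simp))
      rw [hv2]
      exact add_mem (Submodule.smul_mem _ _ hwmem) (Submodule.smul_mem _ _ humem)
    · rw [Submodule.span_le]
      intro x hx
      simp only [Set.mem_insert_iff, Set.mem_singleton_iff] at hx
      rcases hx with rfl | rfl <;>
        refine SetLike.mem_coe.mpr (Module.End.mem_eigenspace_iff.mpr ?_)
      · rw [hg1N, map_smul, hSwN, smul_comm]
      · rw [hg2N, map_smul, hSuN, smul_comm]

end Stmt11
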